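/- The polynomials R_n(x) defined by R₀(x) = x and R_{n+1}(x) = (6x² − g₂/2)R_n'(x) + (4x³ − g₂x − g₃)R_n''(x) have degree n+1, leading coefficient (2n+1)!, and the coefficient of x^n in R_n is 0. -/
import Mathlib


open Polynomial

/-- The polynomials `R_n`: `R₀(x) = x` and
`R_{n+1}(x) = (6x² − g₂/2)R_n'(x) + (4x³ − g₂x − g₃)R_n''(x)`. -/
noncomputable def Rpoly (g2 g3 : ℂ) : ℕ → Polynomial ℂ
  | 0 => X
  | n + 1 =>
      (6 * X ^ 2 - C (g2 / 2)) * derivative (Rpoly g2 g3 n)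
        + (4 * X ^ 3 - C g2 * X - C g3) * derivative (derivative (Rpoly g2 g3 n))

/-- `R_n` has degree `n+1`, leading coefficient `(2n+1)!`, and vanishing coefficient
of `x^n`. -/
lemma key (g2 g3 : ℂ) (q s : Polynomial ℂ) (m : ℕ) :
    ((6*X^2 - C (g2/2)) * q + (4*X^3 - C g2 * X - C g3) * s).coeff m
    = 6 * (if 2 ≤ m then q.coeff (m-2) else 0) - g2/2 * q.coeff m
      + (4 * (if 3 ≤ m then s.coeff (m-3) else 0)
        - g2 * (if 1 ≤ m then s.coeff (m-1) else 0) - g3 * s.coeff m) := by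
  have h : (6*X^2 - C (g2/2)) * q + (4*X^3 - C g2 * X - C g3) * s
      = C 6 * (q * X^2) - C (g2/2) * q
        + (C 4 * (s * X^3) - C g2 * (s * X^1) - C g3 * s) := by
    have h6 : (C 6 : ℂ[X]) = 6 := map_ofNat C _
    have h4 : (C 4 : ℂ[X]) = 4 := map_ofNat C _
    rw [h6, h4]; ring
  rw [h]
  simp only [coeff_add, coeff_sub, coeff_C_mul, coeff_mul_X_pow']

theorem Rpoly_degree_leading (g2 g3 : ℂ) (n : ℕ) :
    (Rpoly g2 g3 n).natDegree = n + 1 ∧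
    (Rpoly g2 g3 n).coeff (n + 1) = (Nat.factorial (2*n + 1) : ℂ) ∧
    (Rpoly g2 g3 n).coeff n = 0 := by
  induction n with
  | zero => simp [Rpoly, Nat.factorial]
  | succ n ih =>
    obtain ⟨hd, hl, hz⟩ := ih
    set r := Rpoly g2 g3 n with hr
    have hzero : ∀ m, n + 1 < m → r.coeff m = 0 := fun m hm =>
      coeff_eq_zero_of_natDegree_lt (hd ▸ hm)
    have hR : Rpoly g2 g3 (n+1)
        = (6 * X ^ 2 - C (g2 / 2)) * derivative r
          + (4 * X ^ 3 - C g2 * X - C g3) * derivative (derivative r) := rfl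
    have hD : ∀ k, (derivative r).coeff k = r.coeff (k+1) * (k+1) := fun k =>
      coeff_derivative r k
    have hDD : ∀ k, (derivative (derivative r)).coeff k
        = r.coeff (k+2) * (k+2) * (k+1) := by
      intro k
      rw [coeff_derivative, coeff_derivative]
      push_cast; ring
    -- leading coefficient
    have hl' : (Rpoly g2 g3 (n+1)).coeff (n+2) = (Nat.factorial (2*(n+1) + 1) : ℂ) := by
      rw [hR, key]
      have e1 : n + 2 - 2 = n := by omega
      rw [if_pos (by omega : 2 ≤ n+2), e1, hD, hD, hl,
        hzero (n+2+1) (by omega)]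
      rcases Nat.eq_zero_or_pos n with h0 | hpos
      · subst h0
        rw [if_neg (by omega), if_pos (by omega), hDD, hDD,
          hzero (0+2-1+2) (by omega), hzero (0+2+2) (by omega)]
        norm_num [Nat.factorial]
      · have e3 : n + 2 - 3 = n - 1 := by omega
        have e4 : n - 1 + 2 = n + 1 := by omega
        rw [if_pos (by omega : 3 ≤ n+2), if_pos (by omega : 1 ≤ n+2), e3, hDD, hDD, hDD,
          e4, hl, hzero (n+2-1+2) (by omega), hzero (n+2+2) (by omega)]
        have hfac : (Nat.factorial (2*(n+1)+1) : ℂ)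
            = (Nat.factorial (2*n+1) : ℂ) * (2*n+2) * (2*n+3) := by
          have : Nat.factorial (2*(n+1)+1)
              = Nat.factorial (2*n+1) * (2*n+2) * (2*n+3) := by
            have : 2*(n+1)+1 = (2*n+1) + 1 + 1 := by omega
            rw [this, Nat.factorial_succ, Nat.factorial_succ]; ring_nf
          rw [this]; push_cast; ring
        rw [hfac, Nat.cast_sub (by omega : 1 ≤ n)]
        push_cast
        ring
    -- coefficient at n+1 vanishes
    have hz' : (Rpoly g2 g3 (n+1)).coeff (n+1) = 0 := by
      rw [hR, key]
      have hq : (derivative r).coeff (n+1) = 0 := by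
        rw [hD, hzero _ (by omega)]; ring
      have hs : (derivative (derivative r)).coeff (n+1) = 0 := by
        rw [hDD, hzero _ (by omega)]; ring
      rcases Nat.lt_or_ge n 2 with h01 | h2
      · interval_cases n
        · rw [if_neg (by omega), if_neg (by omega), if_pos (by omega), hq, hs, hDD,
            hzero _ (by omega : 0+1 < 0+2)]
          ring
        · rw [if_pos (by omega), if_neg (by omega), if_pos (by omega), hq, hs]
          show (6:ℂ) * (derivative r).coeff 0 - _ + (_ - g2 * (derivative (derivative r)).coeff 1 - _) = 0
          rw [hD, hDD, hz, hzero _ (by omega : 1+1 < 1+2)]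
          ring
      · have e1 : n + 1 - 2 = n - 1 := by omega
        have e2 : n + 1 - 3 = n - 2 := by omega
        have e3 : n - 1 + 1 = n := by omega
        have e4 : n - 2 + 2 = n := by omega
        rw [if_pos (by omega), if_pos (by omega), if_pos (by omega), e1, e2, hq, hs,
          hD, hDD, hDD, e3, e4, hz, hzero (n+1-1+2) (by omega)]
        ring
    refine ⟨?_, hl', hz'⟩
    have hub : (Rpoly g2 g3 (n+1)).natDegree ≤ n + 2 := by
      rw [natDegree_le_iff_coeff_eq_zero]
      intro m hm
      rw [hR, key]
      have c1 : (derivative r).coeff (m-2) = 0 := by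
        rw [hD, hzero _ (by omega)]; ring
      have c2 : (derivative r).coeff m = 0 := by
        rw [hD, hzero _ (by omega)]; ring
      have c3 : (derivative (derivative r)).coeff (m-3) = 0 := by
        rw [hDD, hzero _ (by omega)]; ring
      have c4 : (derivative (derivative r)).coeff (m-1) = 0 := by
        rw [hDD, hzero _ (by omega)]; ring
      have c5 : (derivative (derivative r)).coeff m = 0 := by
        rw [hDD, hzero _ (by omega)]; ring
      rw [if_pos (by omega), if_pos (by omega), if_pos (by omega), c1, c2, c3, c4, c5]
      ring
    have hlb : n + 2 ≤ (Rpoly g2 g3 (n+1)).natDegree := by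
      apply le_natDegree_of_ne_zero
      rw [hl']
      exact Nat.cast_ne_zero.mpr (Nat.factorial_ne_zero _)
    omega
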